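/- With the hypotheses of the preceding characteristic estimate (0 < μ_m < ⋯ < μ_1 and 0 < ε < 1 − max_{j<i} μ_i/μ_j), for any (x,ξ) ∈ T and any 1 ≤ i, j ≤ m, the function ν ↦ χ_{ij}(x,ξ;ν) − (1−ε)ζ_{ij}(x,ξ;ν) is strictly decreasing on [0, ν^F], and in particular 0 ≤ χ^F_{ij}(x,ξ) − (1−ε)ζ^F_{ij}(x,ξ) ≤ x − (1−ε)ξ. -/
import Mathlib


/-- Monotonicity of ν ↦ χ(ν) - (1-ε)ζ(ν) along the L-kernel characteristics:
it is strictly decreasing on [0, νF], and the terminal value satisfies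
0 ≤ χF - (1-ε)ζF ≤ x - (1-ε)ξ. -/
theorem stmt_7 (m : ℕ) (μ : Fin m → ℝ)
    (hμpos : ∀ i, 0 < μ i)
    (hμdec : ∀ i j : Fin m, i < j → μ j < μ i)
    (ε : ℝ) (hε0 : 0 < ε)
    (hεmax : ∀ i j : Fin m, j < i → ε < 1 - μ i / μ j)
    (hε1 : ε < 1)
    (i j : Fin m) (x ξ : ℝ)
    (hT : 0 ≤ ξ ∧ ξ ≤ x ∧ x ≤ 1)
    (eij : ℝ) (heij : eij = if j < i then (1:ℝ) else -1)
    (νF : ℝ) (hνF0 : 0 ≤ νF)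
    (hInT : ∀ ν ∈ Set.Icc 0 νF,
      0 ≤ ξ + eij * μ j * ν ∧ ξ + eij * μ j * ν ≤ x + eij * μ i * ν ∧
        x + eij * μ i * ν ≤ 1) :
    StrictAntiOn
      (fun ν => x + eij * μ i * ν - (1 - ε) * (ξ + eij * μ j * ν))
      (Set.Icc 0 νF) ∧
    0 ≤ x + eij * μ i * νF - (1 - ε) * (ξ + eij * μ j * νF) ∧
    x + eij * μ i * νF - (1 - ε) * (ξ + eij * μ j * νF) ≤ x - (1 - ε) * ξ := by
  have hμj := hμpos j
  have hslope : eij * (μ i - (1 - ε) * μ j) < 0 := by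
    by_cases hji : j < i
    · have h := hεmax i j hji
      have : μ i / μ j < 1 - ε := by linarith
      have : μ i < (1 - ε) * μ j := by
        rw [div_lt_iff₀ hμj] at this; linarith
      simp [heij, hji]; linarith
    · have hij : i ≤ j := le_of_not_gt hji
      have hμle : μ j ≤ μ i := by
        rcases lt_or_eq_of_le hij with h | h
        · exact le_of_lt (hμdec i j h)
        · rw [h]
      have : (1 - ε) * μ j < μ i := by nlinarith
      simp only [heij, if_neg hji]
      nlinarith
  constructor
  · intro a ha b hb hab
    simp only
    nlinarith [hslope]
  · have hνFmem : νF ∈ Set.Icc (0:ℝ) νF := ⟨hνF0, le_refl _⟩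
    obtain ⟨h1, h2, h3⟩ := hInT νF hνFmem
    constructor
    · nlinarith
    · nlinarith [mul_nonpos_of_nonpos_of_nonneg (le_of_lt hslope) hνF0]
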